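/- arXiv:2601.08180 — 4 statements merged into one kernel-verified Lean document; each statement's English description precedes it below -/
import Mathlib

section
/- For all complex-valued Schwartz functions f and g on ℝ^{2N} and every coordinate index 1 ≤ j ≤ 2N, the Leibniz rule ∂_j(f × g) = (∂_j f) × g + f × (∂_j g) holds pointwise on ℝ^{2N}, where ∂_j denotes the partial derivative in the j-th coordinate direction. -/
set_option maxHeartbeats 1000000

open MeasureTheory SchwartzMap Complex

noncomputable section

abbrev PS (N : ℕ) := EuclideanSpace ℝ (Fin N ⊕ Fin N)

def symp {N : ℕ} (u v : PS N) : ℝ :=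
  ∑ i : Fin N, (u (Sum.inl i) * v (Sum.inr i) - u (Sum.inr i) * v (Sum.inl i))

def mes (N : ℕ) : Measure (PS N) :=
  (ENNReal.ofReal ((2 * Real.pi) ^ N))⁻¹ • (volume : Measure (PS N))

def twProd {N : ℕ} (f g : PS N → ℂ) : PS N → ℂ := fun u =>
  ∫ s, ∫ t, f (u + s) * g (u + t) * Complex.exp (Complex.I * (symp s t : ℂ)) ∂(mes N) ∂(mes N)

/-- Partial derivative in the `j`-th coordinate direction. -/
def pdj {N : ℕ} (j : Fin N ⊕ Fin N) (f : PS N → ℂ) : PS N → ℂ := fun u =>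
  fderiv ℝ f u (EuclideanSpace.single j (1 : ℝ))

namespace TWAux

variable {N : ℕ}

lemma mes_ne_zero (N : ℕ) : (ENNReal.ofReal ((2 * Real.pi) ^ N))⁻¹ ≠ 0 := by
  simp [ENNReal.inv_ne_zero]

lemma mes_ne_top (N : ℕ) : (ENNReal.ofReal ((2 * Real.pi) ^ N))⁻¹ ≠ ⊤ := by
  rw [Ne, ENNReal.inv_eq_top, ENNReal.ofReal_eq_zero, not_le]
  positivity

lemma integrable_mes_iff {E : Type*} [NormedAddCommGroup E] {f : PS N → E} :
    Integrable f (mes N) ↔ Integrable f volume := by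
  rw [mes, integrable_smul_measure (mes_ne_zero N) (mes_ne_top N)]

instance : SigmaFinite (mes N) := by
  rw [mes, ← ENNReal.coe_toNNReal (mes_ne_top N), ← ENNReal.smul_def]
  infer_instance

/-- The decay weight. -/
def w (N : ℕ) (x : PS N) : ℝ := (1 + ‖x‖) ^ (-(2 * (N : ℝ) + 1))

lemma w_pos (x : PS N) : 0 < w N x := Real.rpow_pos_of_pos (by positivity) _

lemma schwartz_decay {E : Type*} [NormedAddCommGroup E] [NormedSpace ℝ E]
    (φ : SchwartzMap (PS N) E) :
    ∃ C : ℝ, 0 ≤ C ∧ ∀ x : PS N, ‖φ x‖ ≤ C * w N x := by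
  set k : ℕ := 2 * N + 1
  refine ⟨2 ^ k * (Finset.Iic (k, 0)).sup (schwartzSeminormFamily ℝ (PS N) E) φ, by positivity,
    fun x => ?_⟩
  have h := one_add_le_sup_seminorm_apply (𝕜 := ℝ) (m := (k, 0)) (k := k) (n := 0)
    le_rfl le_rfl φ x
  rw [norm_iteratedFDeriv_zero] at h
  have h1 : (0 : ℝ) < 1 + ‖x‖ := by positivity
  have h2 : w N x = ((1 + ‖x‖) ^ k)⁻¹ := by
    rw [w, ← Real.rpow_natCast (1 + ‖x‖) k, ← Real.rpow_neg h1.le]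
    norm_num [k]
  rw [h2, ← div_eq_mul_inv, le_div_iff₀ (by positivity)]
  calc ‖φ x‖ * (1 + ‖x‖) ^ k = (1 + ‖x‖) ^ k * ‖φ x‖ := mul_comm _ _
    _ ≤ _ := h

lemma integrable_w_shift (u : PS N) :
    Integrable (fun s : PS N => w N (u + s)) (mes N) := by
  rw [integrable_mes_iff]
  have h0 : Integrable (fun x : PS N => (1 + ‖x‖) ^ (-(2 * (N : ℝ) + 1))) volume := by
    apply integrable_one_add_norm
    have : Module.finrank ℝ (PS N) = 2 * N := by
      simp [finrank_euclideanSpace, two_mul]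
    rw [this]
    push_cast
    linarith
  exact h0.comp_add_left u

lemma continuous_symp : Continuous (fun p : PS N × PS N => symp p.1 p.2) := by
  unfold symp
  refine continuous_finset_sum _ fun i _ => Continuous.sub ?_ ?_
  · exact (((EuclideanSpace.proj (Sum.inl i : Fin N ⊕ Fin N)).continuous).comp
      continuous_fst).mul (((EuclideanSpace.proj (Sum.inr i : Fin N ⊕ Fin N)).continuous).comp
      continuous_snd)
  · exact (((EuclideanSpace.proj (Sum.inr i : Fin N ⊕ Fin N)).continuous).comp
      continuous_fst).mul (((EuclideanSpace.proj (Sum.inl i : Fin N ⊕ Fin N)).continuous).comp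
      continuous_snd)

lemma continuous_phase : Continuous (fun p : PS N × PS N =>
    Complex.exp (Complex.I * (symp p.1 p.2 : ℂ))) :=
  Complex.continuous_exp.comp (continuous_const.mul (continuous_ofReal.comp continuous_symp))

lemma norm_phase (p : PS N × PS N) :
    ‖Complex.exp (Complex.I * (symp p.1 p.2 : ℂ))‖ = 1 := by
  rw [Complex.norm_exp]
  simp

lemma integrable_pair (φ ψ : SchwartzMap (PS N) ℂ) (x : PS N) :
    Integrable (fun p : PS N × PS N =>
      φ (x + p.1) * ψ (x + p.2) * Complex.exp (Complex.I * (symp p.1 p.2 : ℂ)))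
      ((mes N).prod (mes N)) := by
  have hφ : Integrable (fun s => φ (x + s)) (mes N) := by
    rw [integrable_mes_iff]; exact φ.integrable.comp_add_left x
  have hψ : Integrable (fun t => ψ (x + t)) (mes N) := by
    rw [integrable_mes_iff]; exact ψ.integrable.comp_add_left x
  have hbd := hφ.norm.mul_prod hψ.norm
  refine hbd.mono' ?_ (Filter.Eventually.of_forall fun p => ?_)
  · exact (((φ.continuous.comp (continuous_const.add continuous_fst)).mul
      (ψ.continuous.comp (continuous_const.add continuous_snd))).mul
      continuous_phase).aestronglyMeasurable
  · rw [norm_mul, norm_mul, norm_phase, mul_one]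

lemma integral_pair (φ ψ : SchwartzMap (PS N) ℂ) (x : PS N) :
    (∫ p : PS N × PS N, φ (x + p.1) * ψ (x + p.2)
        * Complex.exp (Complex.I * (symp p.1 p.2 : ℂ)) ∂((mes N).prod (mes N)))
      = twProd (⇑φ) (⇑ψ) x := by
  rw [MeasureTheory.integral_prod _ (integrable_pair φ ψ x)]
  rfl

lemma w_shift {x u : PS N} (h : ‖x - u‖ ≤ 1) (s : PS N) :
    w N (x + s) ≤ 2 ^ (2 * (N : ℝ) + 1) * w N (u + s) := by
  set r : ℝ := 2 * (N : ℝ) + 1 with hr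
  have hb : (0 : ℝ) < 1 + ‖u + s‖ := by positivity
  have key : (1 + ‖u + s‖) / 2 ≤ 1 + ‖x + s‖ := by
    have : ‖u + s‖ ≤ ‖x + s‖ + 1 := by
      calc ‖u + s‖ = ‖x + s - (x - u)‖ := by rw [show x + s - (x - u) = u + s by abel]
        _ ≤ ‖x + s‖ + ‖x - u‖ := norm_sub_le _ _
        _ ≤ ‖x + s‖ + 1 := by linarith
    linarith [norm_nonneg (x + s)]
  have h1 : w N (x + s) ≤ ((1 + ‖u + s‖) / 2) ^ (-r) := by
    apply Real.rpow_le_rpow_of_nonpos (by positivity) key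
    have : (0 : ℝ) ≤ r := by positivity
    linarith
  calc w N (x + s) ≤ ((1 + ‖u + s‖) / 2) ^ (-r) := h1
    _ = (1 + ‖u + s‖) ^ (-r) / 2 ^ (-r) := Real.div_rpow hb.le (by norm_num) _
    _ = 2 ^ r * w N (u + s) := by
        rw [Real.rpow_neg (by norm_num : (0:ℝ) ≤ 2), div_eq_mul_inv, inv_inv, w]; ring

end TWAux

open TWAux

theorem twProd_leibniz (N : ℕ) (hN : 0 < N)
    (f g : SchwartzMap (PS N) ℂ) (j : Fin N ⊕ Fin N) (u : PS N) :
    pdj j (twProd (⇑f) (⇑g)) u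
      = twProd (pdj j (⇑f)) (⇑g) u + twProd (⇑f) (pdj j (⇑g)) u := by
  classical
  set e : PS N := EuclideanSpace.single j (1 : ℝ) with he
  set μ : Measure (PS N × PS N) := (mes N).prod (mes N) with hμ
  set fd : SchwartzMap (PS N) ℂ := LineDeriv.lineDerivOp e f with hfd
  set gd : SchwartzMap (PS N) ℂ := LineDeriv.lineDerivOp e g with hgd
  have hfd_eq : pdj j (⇑f) = ⇑fd := by
    funext y; rw [hfd, SchwartzMap.lineDerivOp_apply_eq_fderiv]; rfl
  have hgd_eq : pdj j (⇑g) = ⇑gd := by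
    funext y; rw [hgd, SchwartzMap.lineDerivOp_apply_eq_fderiv]; rfl
  -- decay constants
  obtain ⟨C₁, hC₁0, hC₁⟩ := schwartz_decay f
  obtain ⟨C₂, hC₂0, hC₂⟩ := schwartz_decay g
  obtain ⟨C₃, hC₃0, hC₃⟩ := schwartz_decay (SchwartzMap.fderivCLM ℝ (PS N) ℂ f)
  obtain ⟨C₄, hC₄0, hC₄⟩ := schwartz_decay (SchwartzMap.fderivCLM ℝ (PS N) ℂ g)
  set C : ℝ := C₁ + C₂ + C₃ + C₄ with hC
  have hC0 : 0 ≤ C := by positivity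
  have hCf : ∀ y, ‖f y‖ ≤ C * w N y := fun y =>
    (hC₁ y).trans (mul_le_mul_of_nonneg_right (by linarith) (w_pos y).le)
  have hCg : ∀ y, ‖g y‖ ≤ C * w N y := fun y =>
    (hC₂ y).trans (mul_le_mul_of_nonneg_right (by linarith) (w_pos y).le)
  have hCdf : ∀ y, ‖fderiv ℝ (⇑f) y‖ ≤ C * w N y := by
    intro y
    have := hC₃ y
    rw [SchwartzMap.fderivCLM_apply] at this
    exact this.trans (mul_le_mul_of_nonneg_right (by linarith) (w_pos y).le)
  have hCdg : ∀ y, ‖fderiv ℝ (⇑g) y‖ ≤ C * w N y := by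
    intro y
    have := hC₄ y
    rw [SchwartzMap.fderivCLM_apply] at this
    exact this.trans (mul_le_mul_of_nonneg_right (by linarith) (w_pos y).le)
  set r : ℝ := 2 * (N : ℝ) + 1 with hr
  -- the parametrized integrand and its derivative
  set F : PS N → PS N × PS N → ℂ := fun x p =>
    f (x + p.1) * g (x + p.2) * Complex.exp (Complex.I * (symp p.1 p.2 : ℂ)) with hF
  set F' : PS N → PS N × PS N → PS N →L[ℝ] ℂ := fun x p =>
    Complex.exp (Complex.I * (symp p.1 p.2 : ℂ)) •
      (f (x + p.1) • fderiv ℝ (⇑g) (x + p.2) + g (x + p.2) • fderiv ℝ (⇑f) (x + p.1)) with hF'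
  set bound : PS N × PS N → ℝ := fun p =>
    (2 * C ^ 2 * (2 : ℝ) ^ r * (2 : ℝ) ^ r) * (w N (u + p.1) * w N (u + p.2)) with hbound
  have hcont_df : Continuous (fun y => fderiv ℝ (⇑f) y) := by
    have : (fun y => fderiv ℝ (⇑f) y) = ⇑(SchwartzMap.fderivCLM ℝ (PS N) ℂ f) := by
      funext y; exact (SchwartzMap.fderivCLM_apply ℝ f y).symm
    rw [this]; exact (SchwartzMap.fderivCLM ℝ (PS N) ℂ f).continuous
  have hcont_dg : Continuous (fun y => fderiv ℝ (⇑g) y) := by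
    have : (fun y => fderiv ℝ (⇑g) y) = ⇑(SchwartzMap.fderivCLM ℝ (PS N) ℂ g) := by
      funext y; exact (SchwartzMap.fderivCLM_apply ℝ g y).symm
    rw [this]; exact (SchwartzMap.fderivCLM ℝ (PS N) ℂ g).continuous
  -- norm bound on F'
  have hF'_bound : ∀ x : PS N, x ∈ Metric.ball u 1 → ∀ p : PS N × PS N,
      ‖F' x p‖ ≤ bound p := by
    intro x hx p
    have hxu : ‖x - u‖ ≤ 1 := le_of_lt (by simpa [dist_eq_norm] using hx)
    have hws := w_shift hxu p.1
    have hwt := w_shift hxu p.2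
    have hA : ‖F' x p‖ ≤ ‖f (x + p.1)‖ * ‖fderiv ℝ (⇑g) (x + p.2)‖
        + ‖g (x + p.2)‖ * ‖fderiv ℝ (⇑f) (x + p.1)‖ := by
      rw [hF']
      simp only
      refine (norm_smul_le (Complex.exp (Complex.I * (symp p.1 p.2 : ℂ)))
        (f (x + p.1) • fderiv ℝ (⇑g) (x + p.2) + g (x + p.2) • fderiv ℝ (⇑f) (x + p.1))).trans ?_
      rw [norm_phase p, one_mul]
      refine (norm_add_le _ _).trans (add_le_add ?_ ?_)
      · exact norm_smul_le (f (x + p.1)) (fderiv ℝ (⇑g) (x + p.2))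
      · exact norm_smul_le (g (x + p.2)) (fderiv ℝ (⇑f) (x + p.1))
    refine hA.trans ?_
    have h1 : ‖f (x + p.1)‖ * ‖fderiv ℝ (⇑g) (x + p.2)‖
        ≤ (C * w N (x + p.1)) * (C * w N (x + p.2)) :=
      mul_le_mul (hCf _) (hCdg _) (norm_nonneg _) (mul_nonneg hC0 (w_pos _).le)
    have h2 : ‖g (x + p.2)‖ * ‖fderiv ℝ (⇑f) (x + p.1)‖
        ≤ (C * w N (x + p.2)) * (C * w N (x + p.1)) :=
      mul_le_mul (hCg _) (hCdf _) (norm_nonneg _) (mul_nonneg hC0 (w_pos _).le)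
    have hwx : w N (x + p.1) ≤ 2 ^ r * w N (u + p.1) := hws
    have hwy : w N (x + p.2) ≤ 2 ^ r * w N (u + p.2) := hwt
    have h2r : (0:ℝ) < 2 ^ r := Real.rpow_pos_of_pos (by norm_num) _
    have hw1 := (w_pos (N := N) (x + p.1)).le
    have hw2 := (w_pos (N := N) (x + p.2)).le
    have hwu1 := (w_pos (N := N) (u + p.1)).le
    have hwu2 := (w_pos (N := N) (u + p.2)).le
    rw [hbound]
    simp only
    nlinarith [mul_le_mul hwx hwy hw2 (by positivity : (0:ℝ) ≤ 2 ^ r * w N (u + p.1)),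
      mul_nonneg hC0 hC0]
  have hbound_int : Integrable bound μ := by
    have := ((integrable_w_shift (N := N) u).mul_prod (integrable_w_shift (N := N) u)).const_mul
      (2 * C ^ 2 * (2 : ℝ) ^ r * (2 : ℝ) ^ r)
    exact this
  -- differentiability of x ↦ F x p
  have hdiff : ∀ (p : PS N × PS N) (x : PS N), HasFDerivAt (fun y => F y p) (F' x p) x := by
    intro p x
    have h1 : HasFDerivAt (fun y : PS N => f (y + p.1)) (fderiv ℝ (⇑f) (x + p.1)) x := by
      have hf' : HasFDerivAt (⇑f) (fderiv ℝ (⇑f) (x + p.1)) (x + p.1) :=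
        f.differentiableAt.hasFDerivAt
      have ht : HasFDerivAt (fun y : PS N => y + p.1)
          (ContinuousLinearMap.id ℝ (PS N)) x := (hasFDerivAt_id x).add_const p.1
      have := hf'.comp x ht
      simp only [ContinuousLinearMap.comp_id] at this
      exact this
    have h2 : HasFDerivAt (fun y : PS N => g (y + p.2)) (fderiv ℝ (⇑g) (x + p.2)) x := by
      have hg' : HasFDerivAt (⇑g) (fderiv ℝ (⇑g) (x + p.2)) (x + p.2) :=
        g.differentiableAt.hasFDerivAt
      have ht : HasFDerivAt (fun y : PS N => y + p.2)
          (ContinuousLinearMap.id ℝ (PS N)) x := (hasFDerivAt_id x).add_const p.2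
      have := hg'.comp x ht
      simp only [ContinuousLinearMap.comp_id] at this
      exact this
    exact (h1.mul h2).mul_const _
  -- measurability
  have hF_meas : ∀ x : PS N, AEStronglyMeasurable (F x) μ := fun x =>
    (((f.continuous.comp (continuous_const.add continuous_fst)).mul
      (g.continuous.comp (continuous_const.add continuous_snd))).mul
      continuous_phase).aestronglyMeasurable
  have hF'_meas : AEStronglyMeasurable (F' u) μ := by
    apply Continuous.aestronglyMeasurable
    apply Continuous.smul continuous_phase
    exact ((f.continuous.comp (continuous_const.add continuous_fst)).smul
        (hcont_dg.comp (continuous_const.add continuous_snd))).add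
      ((g.continuous.comp (continuous_const.add continuous_snd)).smul
        (hcont_df.comp (continuous_const.add continuous_fst)))
  have hF'_int : Integrable (F' u) μ := by
    refine hbound_int.mono' hF'_meas (Filter.Eventually.of_forall fun p => ?_)
    exact hF'_bound u (Metric.mem_ball_self one_pos) p
  -- the main derivative computation
  have key : HasFDerivAt (fun x => ∫ p, F x p ∂μ) (∫ p, F' u p ∂μ) u := by
    apply hasFDerivAt_integral_of_dominated_of_fderiv_le (bound := bound)
      (F' := F') (s := Metric.ball u 1) (Metric.ball_mem_nhds u one_pos)
    · exact Filter.Eventually.of_forall hF_meas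
    · exact integrable_pair f g u
    · exact hF'_meas
    · exact Filter.Eventually.of_forall fun p x hx => hF'_bound x hx p
    · exact hbound_int
    · exact Filter.Eventually.of_forall fun p x _ => hdiff p x
  have htw : twProd (⇑f) (⇑g) = fun x => ∫ p, F x p ∂μ := by
    funext x
    exact (integral_pair f g x).symm
  have key2 : HasFDerivAt (twProd (⇑f) (⇑g)) (∫ p, F' u p ∂μ) u := htw ▸ key
  have hlhs : pdj j (twProd (⇑f) (⇑g)) u = (∫ p, F' u p ∂μ) e := by
    rw [pdj, key2.fderiv]
  rw [hlhs, ContinuousLinearMap.integral_apply hF'_int]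
  have hptw : ∀ p : PS N × PS N, F' u p e =
      f (u + p.1) * gd (u + p.2) * Complex.exp (Complex.I * (symp p.1 p.2 : ℂ))
      + fd (u + p.1) * g (u + p.2) * Complex.exp (Complex.I * (symp p.1 p.2 : ℂ)) := by
    intro p
    rw [hF']
    simp only [ContinuousLinearMap.smul_apply, ContinuousLinearMap.add_apply, smul_eq_mul]
    rw [hgd, hfd, SchwartzMap.lineDerivOp_apply_eq_fderiv, SchwartzMap.lineDerivOp_apply_eq_fderiv]
    ring
  rw [integral_congr_ae (Filter.Eventually.of_forall hptw)]
  rw [integral_add (integrable_pair f gd u) (integrable_pair fd g u)]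
  rw [integral_pair f gd u, integral_pair fd g u, hfd_eq, hgd_eq]
  ring
end
end

section
/- For all complex-valued Schwartz functions f and g on ℝ^{2N} and every coordinate index 1 ≤ j ≤ 2N, one has pointwise on ℝ^{2N}: u_j·(f × g)(u) = (f × (μ_j g))(u) + i·((∂̂_j f) × g)(u), and also u_j·(f × g)(u) = ((μ_j f) × g)(u) − i·(f × (∂̂_j g))(u). -/
open MeasureTheory SchwartzMap Complex

noncomputable section

/-- Multiplication by the `j`-th coordinate. -/
def muj {N : ℕ} (j : Fin N ⊕ Fin N) (f : PS N → ℂ) : PS N → ℂ := fun u =>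
  (u j : ℂ) * f u

/-- The "hat" derivative: `∂̂_j f = ∂_{j+N} f` for `1 ≤ j ≤ N`, `∂̂_j f = -∂_{j-N} f`
for `N < j ≤ 2N`. -/
def hatpdj {N : ℕ} (j : Fin N ⊕ Fin N) (f : PS N → ℂ) : PS N → ℂ :=
  match j with
  | Sum.inl i => pdj (Sum.inr i) f
  | Sum.inr i => fun u => -(pdj (Sum.inl i) f u)

namespace TwAux

open scoped RealInnerProductSpace

variable {N : ℕ}

/-- The rotation `J` so that `symp s t = ⟪J t, s⟫`. -/
def Jm (t : PS N) : PS N := WithLp.toLp 2 fun a =>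
  Sum.elim (fun i => t (Sum.inr i)) (fun i => -t (Sum.inl i)) a

lemma Jm_inl (t : PS N) (i : Fin N) : Jm t (Sum.inl i) = t (Sum.inr i) := rfl
lemma Jm_inr (t : PS N) (i : Fin N) : Jm t (Sum.inr i) = -t (Sum.inl i) := rfl

lemma inner_Jm (s t : PS N) : ⟪Jm t, s⟫ = symp s t := by
  simp only [PiLp.inner_apply, RCLike.inner_apply, conj_trivial, symp,
    Fintype.sum_sum_type, Jm, Sum.elim_inl, Sum.elim_inr]
  rw [← Finset.sum_add_distrib]
  congr 1
  ext i
  ring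

lemma symp_swap (s t : PS N) : symp t s = -symp s t := by
  simp only [symp, ← Finset.sum_neg_distrib]
  congr 1
  ext i
  ring

lemma inner_neg_Jm (s t : PS N) : ⟪-Jm s, t⟫ = symp s t := by
  rw [inner_neg_left, inner_Jm, symp_swap, neg_neg]

/-- coordinate function has temperate growth -/
lemma coordTG (j : Fin N ⊕ Fin N) :
    Function.HasTemperateGrowth (fun x : PS N => ((x j : ℝ) : ℂ)) := by
  exact (Complex.ofRealCLM.comp
    (EuclideanSpace.proj j : PS N →L[ℝ] ℝ)).hasTemperateGrowth

/-- Multiplication by the `j`-th coordinate, as a map of Schwartz functions. -/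
def mujS (j : Fin N ⊕ Fin N) (g : SchwartzMap (PS N) ℂ) : SchwartzMap (PS N) ℂ :=
  SchwartzMap.bilinLeftCLM ((ContinuousLinearMap.mul ℝ ℂ).flip) (coordTG j) g

lemma mujS_apply (j : Fin N ⊕ Fin N) (g : SchwartzMap (PS N) ℂ) (x : PS N) :
    mujS j g x = (x j : ℂ) * g x := rfl

/-- The hat derivative as a map of Schwartz functions. -/
def hatS (j : Fin N ⊕ Fin N) (f : SchwartzMap (PS N) ℂ) : SchwartzMap (PS N) ℂ :=
  match j with
  | Sum.inl i => (LineDeriv.lineDerivOp (EuclideanSpace.single (Sum.inr i : Fin N ⊕ Fin N) (1 : ℝ) : PS N) f : SchwartzMap (PS N) ℂ)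
  | Sum.inr i => -(LineDeriv.lineDerivOp (EuclideanSpace.single (Sum.inl i : Fin N ⊕ Fin N) (1 : ℝ) : PS N) f : SchwartzMap (PS N) ℂ)

lemma hatS_apply (j : Fin N ⊕ Fin N) (f : SchwartzMap (PS N) ℂ) (x : PS N) :
    hatS j f x = hatpdj j (⇑f) x := by
  cases j
  · simp [hatS, hatpdj, pdj, SchwartzMap.lineDerivOp_apply_eq_fderiv]
  · show -((LineDeriv.lineDerivOp (EuclideanSpace.single (Sum.inl _ : Fin N ⊕ Fin N) (1:ℝ) : PS N) f : SchwartzMap (PS N) ℂ) x) = _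
    simp [hatpdj, pdj, SchwartzMap.lineDerivOp_apply_eq_fderiv]

/-- Key integration by parts lemma. -/
lemma key (F : SchwartzMap (PS N) ℂ) (u w : PS N) (k : Fin N ⊕ Fin N) :
    ((w k : ℝ) : ℂ) * ∫ s : PS N, F (u + s) * Complex.exp (Complex.I * ((⟪w, s⟫ : ℝ) : ℂ))
      = Complex.I * ∫ s : PS N,
          fderiv ℝ (⇑F) (u + s) (EuclideanSpace.single k (1 : ℝ)) *
            Complex.exp (Complex.I * ((⟪w, s⟫ : ℝ) : ℂ)) := by
  set v : PS N := EuclideanSpace.single k (1 : ℝ) with hv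
  set L : PS N →L[ℝ] ℂ := Complex.I • (Complex.ofRealCLM.comp (innerSL ℝ w)) with hLdef
  have hLs : ∀ s : PS N, L s = Complex.I * ((⟪w, s⟫ : ℝ) : ℂ) := by
    intro s
    simp [hLdef, smul_eq_mul]
  have hLv : L v = Complex.I * ((w k : ℝ) : ℂ) := by
    rw [hLs]
    -- norm_cast
    rw [hv]
    simp [EuclideanSpace.inner_single_right]
  set φ : PS N → ℂ := fun s => Complex.exp (L s) with hφdef
  have hφd : ∀ s, HasFDerivAt φ (Complex.exp (L s) • L) s := fun s =>
    (L.hasFDerivAt).cexp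
  have hφdiff : Differentiable ℝ φ := fun s => (hφd s).differentiableAt
  have hφ1 : ∀ s, ‖φ s‖ ≤ 1 := by
    intro s
    simp only [hφdef, hLs, Complex.norm_exp]
    simp [Complex.mul_re]
  have hφc : Continuous φ := Complex.continuous_exp.comp L.continuous
  set g : PS N → ℂ := fun s => F (u + s) with hgdef
  have hgd : ∀ s, HasFDerivAt g (fderiv ℝ (⇑F) (u + s)) s := by
    intro s
    have h1 : HasFDerivAt (fun s : PS N => u + s) (ContinuousLinearMap.id ℝ (PS N)) s :=
      (hasFDerivAt_id s).const_add u
    have h2 : HasFDerivAt (⇑F) (fderiv ℝ (⇑F) (u + s)) (u + s) :=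
      (F.differentiable (u + s)).hasFDerivAt
    simpa [hgdef, Function.comp_def] using h2.comp s h1
  have hgdiff : Differentiable ℝ g := fun s => (hgd s).differentiableAt
  have hgint : Integrable g volume := (F.integrable (μ := volume)).comp_add_left u
  have hgc : Continuous g := F.continuous.comp (continuous_const.add continuous_id)
  have hDint : Integrable (fun s => fderiv ℝ (⇑F) (u + s) v) volume := by
    have := ((LineDeriv.lineDerivOp v F : SchwartzMap (PS N) ℂ).integrable (μ := volume)).comp_add_left u
    exact this.congr (ae_of_all _ fun s => by simp [SchwartzMap.lineDerivOp_apply_eq_fderiv])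
  -- integrability hypotheses
  have h3 : Integrable (fun x => φ x * g x) volume :=
    hgint.bdd_mul hφc.aestronglyMeasurable (ae_of_all _ hφ1)
  have h1 : Integrable (fun x => ((Complex.exp (L x) • L) v) * g x) volume := by
    refine (h3.const_mul (L v)).congr (ae_of_all _ fun x => ?_)
    simp only [ContinuousLinearMap.smul_apply, smul_eq_mul, hφdef]
    ring
  have h2 : Integrable (fun x => φ x * fderiv ℝ (⇑F) (u + x) v) volume :=
    hDint.bdd_mul hφc.aestronglyMeasurable (ae_of_all _ hφ1)
  have parts := integral_bilinear_hasFDerivAt_right_eq_neg_left_of_integrable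
    (μ := volume) (B := ContinuousLinearMap.mul ℝ ℂ)
    (f := φ) (f' := fun x => Complex.exp (L x) • L)
    (g := g) (g' := fun s => fderiv ℝ (⇑F) (u + s)) (v := v)
    h1 h2 h3 (fun x _ => hφd x) (fun x _ => hgd x)
  have e1 : (fun x => (ContinuousLinearMap.mul ℝ ℂ) (φ x) (fderiv ℝ (⇑F) (u + x) v))
      = fun x => (fderiv ℝ (⇑F) (u + x) v) * φ x := funext fun x => by
    simp only [ContinuousLinearMap.mul_apply']
    ring
  have e2 : (fun x => (ContinuousLinearMap.mul ℝ ℂ) ((Complex.exp (L x) • L) v) (g x))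
      = fun x => L v * (g x * φ x) := funext fun x => by
    simp only [ContinuousLinearMap.mul_apply', ContinuousLinearMap.smul_apply, smul_eq_mul,
      hφdef]
    ring
  rw [e1, e2, integral_const_mul, hLv] at parts
  -- now rewrite the goal in terms of φ and g
  have eg1 : (∫ s : PS N, F (u + s) * Complex.exp (Complex.I * ((⟪w, s⟫ : ℝ) : ℂ)))
      = ∫ x, g x * φ x :=
    congrArg (integral volume) (funext fun x => by simp only [hφdef, hgdef, hLs])
  have eg2 : (∫ s : PS N, fderiv ℝ (⇑F) (u + s) v *
        Complex.exp (Complex.I * ((⟪w, s⟫ : ℝ) : ℂ)))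
      = ∫ x, fderiv ℝ (⇑F) (u + x) v * φ x :=
    congrArg (integral volume) (funext fun x => by simp only [hφdef, hgdef, hLs])
  rw [eg1, eg2, parts]
  ring_nf
  rw [Complex.I_sq]
  ring

lemma lemA (F : SchwartzMap (PS N) ℂ) (u t : PS N) (j : Fin N ⊕ Fin N) :
    ((t j : ℝ) : ℂ) * ∫ s : PS N, F (u + s) * Complex.exp (Complex.I * ((symp s t : ℝ) : ℂ))
      = -Complex.I * ∫ s : PS N,
          hatpdj j (⇑F) (u + s) * Complex.exp (Complex.I * ((symp s t : ℝ) : ℂ)) := by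
  have hs : ∀ s : PS N, ((symp s t : ℝ) : ℂ) = ((⟪Jm t, s⟫ : ℝ) : ℂ) := fun s => by
    rw [inner_Jm]
  simp only [hs]
  cases j with
  | inl i =>
    have hk := key F u (Jm t) (Sum.inr i)
    rw [Jm_inr] at hk
    push_cast at hk
    simp only [hatpdj, pdj]
    linear_combination -hk
  | inr i =>
    have hk := key F u (Jm t) (Sum.inl i)
    rw [Jm_inl] at hk
    simp only [hatpdj, pdj, neg_mul, integral_neg]
    linear_combination hk

lemma lemB (G : SchwartzMap (PS N) ℂ) (u s : PS N) (j : Fin N ⊕ Fin N) :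
    ((s j : ℝ) : ℂ) * ∫ t : PS N, G (u + t) * Complex.exp (Complex.I * ((symp s t : ℝ) : ℂ))
      = Complex.I * ∫ t : PS N,
          hatpdj j (⇑G) (u + t) * Complex.exp (Complex.I * ((symp s t : ℝ) : ℂ)) := by
  have hs : ∀ t : PS N, ((symp s t : ℝ) : ℂ) = ((⟪-Jm s, t⟫ : ℝ) : ℂ) := fun t => by
    rw [inner_neg_Jm]
  simp only [hs]
  cases j with
  | inl i =>
    have hk := key G u (-Jm s) (Sum.inr i)
    rw [show (-Jm s) (Sum.inr i) = s (Sum.inl i) by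
      simp [Jm_inr]] at hk
    simp only [hatpdj, pdj]
    linear_combination hk
  | inr i =>
    have hk := key G u (-Jm s) (Sum.inl i)
    rw [show (-Jm s) (Sum.inl i) = -s (Sum.inr i) by
      simp [Jm_inl]] at hk
    push_cast at hk
    simp only [hatpdj, pdj, neg_mul, integral_neg]
    linear_combination -hk

lemma icongr {F G : PS N → ℂ} (h : ∀ x, F x = G x) :
    (∫ x, F x) = ∫ x, G x := congrArg (integral volume) (funext h)

lemma symp_cont : Continuous (fun p : PS N × PS N => symp p.1 p.2) := by
  apply continuous_finset_sum
  intro i _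
  exact (((EuclideanSpace.proj (Sum.inl i) : PS N →L[ℝ] ℝ).continuous.comp
      continuous_fst).mul ((EuclideanSpace.proj (Sum.inr i) : PS N →L[ℝ] ℝ).continuous.comp
      continuous_snd)).sub
    (((EuclideanSpace.proj (Sum.inr i) : PS N →L[ℝ] ℝ).continuous.comp
      continuous_fst).mul ((EuclideanSpace.proj (Sum.inl i) : PS N →L[ℝ] ℝ).continuous.comp
      continuous_snd))

lemma symp_cont_right (s : PS N) : Continuous (fun t : PS N => symp s t) :=
  symp_cont.comp (continuous_const.prodMk continuous_id)

lemma normEexp (r : ℝ) : ‖Complex.exp (Complex.I * (r : ℂ))‖ ≤ 1 := by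
  simp [Complex.norm_exp, Complex.mul_re]

lemma int_mul_E (a : PS N → ℂ) (ha : Integrable a volume) (hc : Continuous a)
    (w : PS N → ℝ) (hw : Continuous w) :
    Integrable (fun x => a x * Complex.exp (Complex.I * ((w x : ℝ) : ℂ))) volume := by
  have hm : AEStronglyMeasurable (fun x => Complex.exp (Complex.I * ((w x : ℝ) : ℂ))) volume :=
    (Complex.continuous_exp.comp
      (continuous_const.mul (Complex.continuous_ofReal.comp hw))).aestronglyMeasurable
  have h := ha.bdd_mul hm (ae_of_all _ fun x => normEexp (w x))
  exact h.congr (ae_of_all _ fun x => mul_comm _ _)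

lemma trans_int (F : SchwartzMap (PS N) ℂ) (u : PS N) :
    Integrable (fun x => F (u + x)) volume := (F.integrable (μ := volume)).comp_add_left u

lemma trans_cont (F : SchwartzMap (PS N) ℂ) (u : PS N) :
    Continuous fun x : PS N => F (u + x) :=
  F.continuous.comp (continuous_const.add continuous_id)

lemma mujtrans_int (g : SchwartzMap (PS N) ℂ) (j : Fin N ⊕ Fin N) (u : PS N) :
    Integrable (fun t : PS N => ((t j : ℝ) : ℂ) * g (u + t)) volume := by
  have h1 := ((mujS j g).integrable (μ := volume)).comp_add_left u
  have h2 := (trans_int g u).const_mul ((u j : ℝ) : ℂ)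
  exact (h1.sub h2).congr (ae_of_all _ fun t => by
    simp only [Pi.sub_apply, mujS_apply, PiLp.add_apply]
    push_cast
    ring)

lemma mujtrans_cont (g : SchwartzMap (PS N) ℂ) (j : Fin N ⊕ Fin N) (u : PS N) :
    Continuous fun t : PS N => ((t j : ℝ) : ℂ) * g (u + t) :=
  (Complex.continuous_ofReal.comp
    (EuclideanSpace.proj j : PS N →L[ℝ] ℝ).continuous).mul (trans_cont g u)

lemma hattrans_fun (f : SchwartzMap (PS N) ℂ) (j : Fin N ⊕ Fin N) (u : PS N) :
    (fun s : PS N => hatpdj j (⇑f) (u + s)) = fun s => hatS j f (u + s) :=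
  funext fun s => (hatS_apply j f (u + s)).symm

lemma hattrans_int (f : SchwartzMap (PS N) ℂ) (j : Fin N ⊕ Fin N) (u : PS N) :
    Integrable (fun s : PS N => hatpdj j (⇑f) (u + s)) volume := by
  rw [hattrans_fun]
  exact trans_int _ u

lemma hattrans_cont (f : SchwartzMap (PS N) ℂ) (j : Fin N ⊕ Fin N) (u : PS N) :
    Continuous fun s : PS N => hatpdj j (⇑f) (u + s) := by
  rw [hattrans_fun]
  exact trans_cont _ u

lemma jointInt (A B : PS N → ℂ) (hA : Integrable A volume) (hB : Integrable B volume)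
    (hcA : Continuous A) (hcB : Continuous B) :
    Integrable (Function.uncurry fun s t : PS N =>
      A s * B t * Complex.exp (Complex.I * ((symp s t : ℝ) : ℂ)))
      ((volume : Measure (PS N)).prod volume) := by
  have hm : AEStronglyMeasurable (Function.uncurry fun s t : PS N =>
      A s * B t * Complex.exp (Complex.I * ((symp s t : ℝ) : ℂ)))
      ((volume : Measure (PS N)).prod volume) := by
    apply Continuous.aestronglyMeasurable
    exact ((hcA.comp continuous_fst).mul (hcB.comp continuous_snd)).mul
      (Complex.continuous_exp.comp
        (continuous_const.mul (Complex.continuous_ofReal.comp symp_cont)))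
  refine (hA.norm.mul_prod hB.norm).mono' hm (ae_of_all _ fun p => ?_)
  calc ‖A p.1 * B p.2 * Complex.exp (Complex.I * ((symp p.1 p.2 : ℝ) : ℂ))‖
      = ‖A p.1‖ * ‖B p.2‖ * ‖Complex.exp (Complex.I * ((symp p.1 p.2 : ℝ) : ℂ))‖ := by
        simp [norm_mul]
    _ ≤ ‖A p.1‖ * ‖B p.2‖ * 1 := by
        apply mul_le_mul_of_nonneg_left (normEexp _) (by positivity)
    _ = ‖A p.1‖ * ‖B p.2‖ := mul_one _

lemma main1 (f g : SchwartzMap (PS N) ℂ) (j : Fin N ⊕ Fin N) (u : PS N) :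
    ((u j : ℝ) : ℂ) * (∫ s : PS N, ∫ t : PS N,
        f (u + s) * g (u + t) * Complex.exp (Complex.I * ((symp s t : ℝ) : ℂ)))
      = (∫ s : PS N, ∫ t : PS N,
          f (u + s) * (muj j (⇑g) (u + t)) * Complex.exp (Complex.I * ((symp s t : ℝ) : ℂ)))
        + Complex.I * ∫ s : PS N, ∫ t : PS N,
            hatpdj j (⇑f) (u + s) * g (u + t) * Complex.exp (Complex.I * ((symp s t : ℝ) : ℂ)) := by
  have J1 := jointInt (fun s => f (u + s)) (fun t => g (u + t))
    (trans_int f u) (trans_int g u) (trans_cont f u) (trans_cont g u)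
  have J2 := jointInt (fun s => f (u + s)) (fun t => ((t j : ℝ) : ℂ) * g (u + t))
    (trans_int f u) (mujtrans_int g j u) (trans_cont f u) (mujtrans_cont g j u)
  have J3 := jointInt (fun s => hatpdj j (⇑f) (u + s)) (fun t => g (u + t))
    (hattrans_int f j u) (trans_int g u) (hattrans_cont f j u) (trans_cont g u)
  -- inner split
  have step1 : ∀ s : PS N,
      (∫ t : PS N, f (u + s) * (muj j (⇑g) (u + t)) *
          Complex.exp (Complex.I * ((symp s t : ℝ) : ℂ)))
        = ((u j : ℝ) : ℂ) * (∫ t : PS N, f (u + s) * g (u + t) *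
            Complex.exp (Complex.I * ((symp s t : ℝ) : ℂ)))
          + ∫ t : PS N, f (u + s) * (((t j : ℝ) : ℂ) * g (u + t)) *
              Complex.exp (Complex.I * ((symp s t : ℝ) : ℂ)) := by
    intro s
    have p1 : Integrable (fun t : PS N => ((u j : ℝ) : ℂ) * (f (u + s) * g (u + t) *
        Complex.exp (Complex.I * ((symp s t : ℝ) : ℂ)))) volume := by
      refine Integrable.const_mul ?_ _
      refine ((int_mul_E (fun t => g (u + t)) (trans_int g u) (trans_cont g u)
        (fun t => symp s t) (symp_cont_right s)).const_mul (f (u + s))).congr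
        (ae_of_all _ fun t => by ring)
    have p2 : Integrable (fun t : PS N => f (u + s) * (((t j : ℝ) : ℂ) * g (u + t)) *
        Complex.exp (Complex.I * ((symp s t : ℝ) : ℂ))) volume := by
      refine ((int_mul_E (fun t => ((t j : ℝ) : ℂ) * g (u + t)) (mujtrans_int g j u)
        (mujtrans_cont g j u) (fun t => symp s t) (symp_cont_right s)).const_mul
        (f (u + s))).congr (ae_of_all _ fun t => by ring)
    rw [icongr (G := fun t : PS N => ((u j : ℝ) : ℂ) * (f (u + s) * g (u + t) *
        Complex.exp (Complex.I * ((symp s t : ℝ) : ℂ)))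
          + f (u + s) * (((t j : ℝ) : ℂ) * g (u + t)) *
              Complex.exp (Complex.I * ((symp s t : ℝ) : ℂ)))
      (fun t => by
        simp only [muj, PiLp.add_apply]
        push_cast
        ring)]
    rw [integral_add p1 p2, integral_const_mul]
  rw [icongr step1]
  have o1 : Integrable (fun s : PS N => ((u j : ℝ) : ℂ) * (∫ t : PS N, f (u + s) * g (u + t) *
      Complex.exp (Complex.I * ((symp s t : ℝ) : ℂ)))) volume :=
    Integrable.const_mul J1.integral_prod_left _
  have o2 : Integrable (fun s : PS N => ∫ t : PS N, f (u + s) * (((t j : ℝ) : ℂ) * g (u + t)) *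
      Complex.exp (Complex.I * ((symp s t : ℝ) : ℂ))) volume := J2.integral_prod_left
  rw [integral_add o1 o2, integral_const_mul]
  -- now compute the second summand via Fubini + lemA
  have swap1 := integral_integral_swap (f := fun s t : PS N =>
    f (u + s) * (((t j : ℝ) : ℂ) * g (u + t)) *
      Complex.exp (Complex.I * ((symp s t : ℝ) : ℂ))) J2
  have swap2 := integral_integral_swap (f := fun s t : PS N =>
    hatpdj j (⇑f) (u + s) * g (u + t) *
      Complex.exp (Complex.I * ((symp s t : ℝ) : ℂ))) J3
  have inner2 : ∀ t : PS N,
      (∫ s : PS N, f (u + s) * (((t j : ℝ) : ℂ) * g (u + t)) *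
          Complex.exp (Complex.I * ((symp s t : ℝ) : ℂ)))
        = -Complex.I * ∫ s : PS N, hatpdj j (⇑f) (u + s) * g (u + t) *
            Complex.exp (Complex.I * ((symp s t : ℝ) : ℂ)) := by
    intro t
    have hA := lemA f u t j
    calc (∫ s : PS N, f (u + s) * (((t j : ℝ) : ℂ) * g (u + t)) *
          Complex.exp (Complex.I * ((symp s t : ℝ) : ℂ)))
        = ∫ s : PS N, (((t j : ℝ) : ℂ) * g (u + t)) * (f (u + s) *
            Complex.exp (Complex.I * ((symp s t : ℝ) : ℂ))) :=
          icongr fun s => by ring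
      _ = (((t j : ℝ) : ℂ) * g (u + t)) * ∫ s : PS N, f (u + s) *
            Complex.exp (Complex.I * ((symp s t : ℝ) : ℂ)) := integral_const_mul _ _
      _ = g (u + t) * (((t j : ℝ) : ℂ) * ∫ s : PS N, f (u + s) *
            Complex.exp (Complex.I * ((symp s t : ℝ) : ℂ))) := by ring
      _ = g (u + t) * (-Complex.I * ∫ s : PS N, hatpdj j (⇑f) (u + s) *
            Complex.exp (Complex.I * ((symp s t : ℝ) : ℂ))) := by rw [hA]
      _ = -Complex.I * ∫ s : PS N, g (u + t) * (hatpdj j (⇑f) (u + s) *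
            Complex.exp (Complex.I * ((symp s t : ℝ) : ℂ))) := by
          rw [integral_const_mul]
          ring
      _ = -Complex.I * ∫ s : PS N, hatpdj j (⇑f) (u + s) * g (u + t) *
            Complex.exp (Complex.I * ((symp s t : ℝ) : ℂ)) := by
          rw [icongr (F := fun s : PS N => g (u + t) * (hatpdj j (⇑f) (u + s) *
              Complex.exp (Complex.I * ((symp s t : ℝ) : ℂ))))
            (G := fun s : PS N => hatpdj j (⇑f) (u + s) * g (u + t) *
              Complex.exp (Complex.I * ((symp s t : ℝ) : ℂ)))
            (fun s => by ring)]
  have claim : (∫ s : PS N, ∫ t : PS N, f (u + s) * (((t j : ℝ) : ℂ) * g (u + t)) *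
      Complex.exp (Complex.I * ((symp s t : ℝ) : ℂ)))
        = -Complex.I * ∫ s : PS N, ∫ t : PS N, hatpdj j (⇑f) (u + s) * g (u + t) *
            Complex.exp (Complex.I * ((symp s t : ℝ) : ℂ)) := by
    rw [swap1, icongr inner2, integral_const_mul, ← swap2]
  rw [claim]
  ring

lemma main2 (f g : SchwartzMap (PS N) ℂ) (j : Fin N ⊕ Fin N) (u : PS N) :
    ((u j : ℝ) : ℂ) * (∫ s : PS N, ∫ t : PS N,
        f (u + s) * g (u + t) * Complex.exp (Complex.I * ((symp s t : ℝ) : ℂ)))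
      = (∫ s : PS N, ∫ t : PS N,
          (muj j (⇑f) (u + s)) * g (u + t) * Complex.exp (Complex.I * ((symp s t : ℝ) : ℂ)))
        - Complex.I * ∫ s : PS N, ∫ t : PS N,
            f (u + s) * hatpdj j (⇑g) (u + t) *
              Complex.exp (Complex.I * ((symp s t : ℝ) : ℂ)) := by
  have J1 := jointInt (fun s => f (u + s)) (fun t => g (u + t))
    (trans_int f u) (trans_int g u) (trans_cont f u) (trans_cont g u)
  have J4 := jointInt (fun s => ((s j : ℝ) : ℂ) * f (u + s)) (fun t => g (u + t))
    (mujtrans_int f j u) (trans_int g u) (mujtrans_cont f j u) (trans_cont g u)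
  set Gg : PS N → ℂ := fun s => ∫ t : PS N, g (u + t) *
    Complex.exp (Complex.I * ((symp s t : ℝ) : ℂ)) with hGg
  set Ghat : PS N → ℂ := fun s => ∫ t : PS N, hatpdj j (⇑g) (u + t) *
    Complex.exp (Complex.I * ((symp s t : ℝ) : ℂ)) with hGhat
  have e4 : ∀ s : PS N, (∫ t : PS N, f (u + s) * g (u + t) *
      Complex.exp (Complex.I * ((symp s t : ℝ) : ℂ))) = f (u + s) * Gg s := by
    intro s
    rw [hGg, ← integral_const_mul]
    exact icongr fun t => by ring
  have e5 : ∀ s : PS N, (∫ t : PS N, (muj j (⇑f) (u + s)) * g (u + t) *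
      Complex.exp (Complex.I * ((symp s t : ℝ) : ℂ)))
        = (((u + s) j : ℝ) : ℂ) * f (u + s) * Gg s := by
    intro s
    rw [hGg, ← integral_const_mul]
    exact icongr fun t => by simp only [muj]; ring
  have e6 : ∀ s : PS N, (∫ t : PS N, f (u + s) * hatpdj j (⇑g) (u + t) *
      Complex.exp (Complex.I * ((symp s t : ℝ) : ℂ))) = f (u + s) * Ghat s := by
    intro s
    rw [hGhat, ← integral_const_mul]
    exact icongr fun t => by ring
  have hB : ∀ s : PS N, f (u + s) * Ghat s
      = -Complex.I * (((s j : ℝ) : ℂ) * (f (u + s) * Gg s)) := by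
    intro s
    have h' : ((s j : ℝ) : ℂ) * Gg s = Complex.I * Ghat s := lemB g u s j
    have h2 : Ghat s = -Complex.I * (((s j : ℝ) : ℂ) * Gg s) := by
      rw [h', ← mul_assoc]
      simp [Complex.I_mul_I]
    rw [h2]
    ring
  have c1 : Integrable (fun s : PS N => f (u + s) * Gg s) volume :=
    J1.integral_prod_left.congr (ae_of_all _ fun s => e4 s)
  have c2 : Integrable (fun s : PS N => ((s j : ℝ) : ℂ) * (f (u + s) * Gg s)) volume := by
    refine J4.integral_prod_left.congr (ae_of_all _ fun s => ?_)
    show (∫ t : PS N, (((s j : ℝ) : ℂ) * f (u + s)) * g (u + t) *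
        Complex.exp (Complex.I * ((symp s t : ℝ) : ℂ)))
      = ((s j : ℝ) : ℂ) * (f (u + s) * Gg s)
    calc (∫ t : PS N, (((s j : ℝ) : ℂ) * f (u + s)) * g (u + t) *
        Complex.exp (Complex.I * ((symp s t : ℝ) : ℂ)))
        = ((s j : ℝ) : ℂ) * ∫ t : PS N, f (u + s) * g (u + t) *
            Complex.exp (Complex.I * ((symp s t : ℝ) : ℂ)) := by
          rw [← integral_const_mul]
          exact icongr fun t => by ring
      _ = ((s j : ℝ) : ℂ) * (f (u + s) * Gg s) := by rw [e4 s]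
  rw [icongr e4, icongr e5, icongr e6]
  have split : (∫ s : PS N, (((u + s) j : ℝ) : ℂ) * f (u + s) * Gg s)
      = ((u j : ℝ) : ℂ) * (∫ s : PS N, f (u + s) * Gg s)
        + ∫ s : PS N, ((s j : ℝ) : ℂ) * (f (u + s) * Gg s) := by
    rw [← integral_const_mul, ← integral_add (c1.const_mul _) c2]
    exact icongr fun s => by
      simp only [PiLp.add_apply]
      push_cast
      ring
  rw [split, icongr hB, integral_const_mul]
  ring_nf
  rw [Complex.I_sq]
  ring

lemma twProd_eq (a b : PS N → ℂ) (u : PS N) :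
    twProd a b u = (((ENNReal.ofReal ((2 * Real.pi) ^ N))⁻¹).toReal) ^ 2 •
      ∫ s : PS N, ∫ t : PS N, a (u + s) * b (u + t) *
        Complex.exp (Complex.I * ((symp s t : ℝ) : ℂ)) := by
  rw [twProd, mes]
  simp only [integral_smul_measure]
  rw [integral_smul, smul_smul, ← sq]

end TwAux

theorem twProd_coordinate_rules (N : ℕ) (hN : 0 < N)
    (f g : SchwartzMap (PS N) ℂ) (j : Fin N ⊕ Fin N) (u : PS N) :
    (u j : ℂ) * twProd (⇑f) (⇑g) u
        = twProd (⇑f) (muj j (⇑g)) u + Complex.I * twProd (hatpdj j (⇑f)) (⇑g) u ∧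
    (u j : ℂ) * twProd (⇑f) (⇑g) u
        = twProd (muj j (⇑f)) (⇑g) u - Complex.I * twProd (⇑f) (hatpdj j (⇑g)) u := by
  have h1 := TwAux.main1 f g j u
  have h2 := TwAux.main2 f g j u
  set r : ℝ := (((ENNReal.ofReal ((2 * Real.pi) ^ N))⁻¹).toReal) ^ 2 with hr
  constructor
  · rw [TwAux.twProd_eq, TwAux.twProd_eq, TwAux.twProd_eq, ← hr]
    simp only [Complex.real_smul]
    linear_combination ((r : ℝ) : ℂ) * h1
  · rw [TwAux.twProd_eq, TwAux.twProd_eq, TwAux.twProd_eq, ← hr]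
    simp only [Complex.real_smul]
    linear_combination ((r : ℝ) : ℂ) * h2
end
end

section
/- The twisted product of Schwartz functions on ℝ^{2N} is associative: for all complex-valued Schwartz functions f, g, h on ℝ^{2N}, ((f × g) × h)(u) = (f × (g × h))(u) for every u ∈ ℝ^{2N}. -/
open MeasureTheory SchwartzMap Complex

noncomputable section

namespace TwAssoc

open scoped FourierTransform RealInnerProductSpace

variable {N : ℕ}

/-! ### complex exponential helpers -/

lemma expI_add (a b : ℝ) :
    Complex.exp (Complex.I * ((a + b : ℝ) : ℂ)) =
      Complex.exp (Complex.I * (a : ℂ)) * Complex.exp (Complex.I * (b : ℂ)) := by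
  rw [← Complex.exp_add]; push_cast; ring_nf

lemma norm_expI (a : ℝ) : ‖Complex.exp (Complex.I * (a : ℂ))‖ = 1 := by
  rw [mul_comm]
  exact Complex.norm_exp_ofReal_mul_I a

/-! ### symp algebra -/

lemma symp_add_right (a b c : PS N) : symp a (b + c) = symp a b + symp a c := by
  unfold symp
  rw [← Finset.sum_add_distrib]
  refine Finset.sum_congr rfl fun i _ => ?_
  simp only [PiLp.add_apply]
  ring

lemma symp_add_left (a b c : PS N) : symp (a + b) c = symp a c + symp b c := by
  unfold symp
  rw [← Finset.sum_add_distrib]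
  refine Finset.sum_congr rfl fun i _ => ?_
  simp only [PiLp.add_apply]
  ring

lemma symp_sub_right (a b c : PS N) : symp a (b - c) = symp a b - symp a c := by
  unfold symp
  rw [← Finset.sum_sub_distrib]
  refine Finset.sum_congr rfl fun i _ => ?_
  simp only [PiLp.sub_apply]
  ring

lemma symp_sub_left (a b c : PS N) : symp (a - b) c = symp a c - symp b c := by
  unfold symp
  rw [← Finset.sum_sub_distrib]
  refine Finset.sum_congr rfl fun i _ => ?_
  simp only [PiLp.sub_apply]
  ring

lemma symp_self (a : PS N) : symp a a = 0 := by
  unfold symp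
  exact Finset.sum_eq_zero fun i _ => by ring

lemma symp_comm (a b : PS N) : symp a b = - symp b a := by
  have h : symp a b + symp b a = 0 := by
    unfold symp
    rw [← Finset.sum_add_distrib]
    exact Finset.sum_eq_zero fun i _ => by ring
  linarith

/-! ### basic facts about `mes` -/

lemma twoPiN_pos : (0:ℝ) < (2 * Real.pi) ^ N := pow_pos (by positivity) N

lemma mes_def : mes N = (ENNReal.ofReal ((2 * Real.pi) ^ N))⁻¹ • (volume : Measure (PS N)) :=
  rfl

lemma c_ne_top : (ENNReal.ofReal ((2 * Real.pi) ^ N))⁻¹ ≠ ⊤ := by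
  rw [ENNReal.inv_ne_top, Ne, ENNReal.ofReal_eq_zero, not_le]
  exact twoPiN_pos

instance : SigmaFinite (mes N) := by
  have h : mes N
      = ((ENNReal.ofReal ((2 * Real.pi) ^ N))⁻¹).toNNReal • (volume : Measure (PS N)) := by
    rw [mes_def, ENNReal.smul_def, ENNReal.coe_toNNReal c_ne_top]
  rw [h]
  infer_instance

instance : (mes N).IsAddLeftInvariant := by
  rw [mes_def]; infer_instance

instance : (mes N).IsAddRightInvariant := by
  rw [mes_def]; infer_instance

lemma integrable_mes {φ : PS N → ℂ} (hφ : Integrable φ (volume : Measure (PS N))) :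
    Integrable φ (mes N) := by
  rw [mes_def]; exact hφ.smul_measure c_ne_top

lemma integral_mes (φ : PS N → ℂ) :
    ∫ x, φ x ∂(mes N) = ((2 * Real.pi) ^ N)⁻¹ • ∫ x, φ x ∂(volume : Measure (PS N)) := by
  rw [mes_def, integral_smul_measure]
  congr 1
  rw [ENNReal.toReal_inv, ENNReal.toReal_ofReal twoPiN_pos.le]

/-! ### the symplectic rotation J -/

def Jlin (N : ℕ) : PS N →ₗ[ℝ] PS N where
  toFun v := WithLp.toLp 2 fun j => Sum.elim (fun i => -(v (Sum.inr i))) (fun i => v (Sum.inl i)) j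
  map_add' a b := by
    ext j
    cases j <;> simp [PiLp.add_apply] <;> ring
  map_smul' c a := by
    ext j
    cases j <;> simp [PiLp.smul_apply, smul_eq_mul] <;> ring

def Klin (N : ℕ) : PS N →ₗ[ℝ] PS N where
  toFun v := WithLp.toLp 2 fun j => Sum.elim (fun i => v (Sum.inr i)) (fun i => -(v (Sum.inl i))) j
  map_add' a b := by
    ext j
    cases j <;> simp [PiLp.add_apply] <;> ring
  map_smul' c a := by
    ext j
    cases j <;> simp [PiLp.smul_apply, smul_eq_mul] <;> ring

def Jequiv (N : ℕ) : PS N ≃ₗ[ℝ] PS N :=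
  LinearEquiv.ofLinear (Jlin N) (Klin N)
    (by apply LinearMap.ext; intro v; ext j; cases j <;> simp [Jlin, Klin])
    (by apply LinearMap.ext; intro v; ext j; cases j <;> simp [Jlin, Klin])

def Jiso (N : ℕ) : PS N ≃ₗᵢ[ℝ] PS N :=
  (Jequiv N).isometryOfInner (by
    intro x y
    simp only [Jequiv, LinearEquiv.ofLinear_apply, Jlin, LinearMap.coe_mk, AddHom.coe_mk,
      PiLp.inner_apply, RCLike.inner_apply, conj_trivial, Fintype.sum_sum_type,
      Sum.elim_inl, Sum.elim_inr]
    rw [add_comm]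
    congr 1
    exact Finset.sum_congr rfl fun i _ => by ring)

lemma Jiso_apply (v : PS N) :
    Jiso N v = WithLp.toLp 2 fun j => Sum.elim (fun i => -(v (Sum.inr i))) (fun i => v (Sum.inl i)) j := rfl

lemma symp_inner (v t : PS N) : symp v t = ⟪Jiso N v, t⟫ := by
  simp only [Jiso_apply, PiLp.inner_apply, RCLike.inner_apply, conj_trivial,
    Fintype.sum_sum_type, Sum.elim_inl, Sum.elim_inr, symp]
  rw [Finset.sum_sub_distrib, add_comm, sub_eq_add_neg, ← Finset.sum_neg_distrib]
  congr 1
  exact Finset.sum_congr rfl fun i _ => by ring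
  exact Finset.sum_congr rfl fun i _ => by ring

lemma symp_continuous₂ {α : Type*} [TopologicalSpace α] {φ ψ : α → PS N}
    (hφ : Continuous φ) (hψ : Continuous ψ) :
    Continuous fun x => symp (φ x) (ψ x) := by
  simp only [symp_inner]
  exact Continuous.inner ((Jiso N).continuous.comp hφ) hψ

lemma expSymp_continuous {α : Type*} [TopologicalSpace α] {φ ψ : α → PS N}
    (hφ : Continuous φ) (hψ : Continuous ψ) :
    Continuous fun x => Complex.exp (Complex.I * (symp (φ x) (ψ x) : ℂ)) :=
  Complex.continuous_exp.comp (continuous_const.mul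
    (Complex.continuous_ofReal.comp (symp_continuous₂ hφ hψ)))

/-! ### the symplectic Fourier transform Φ -/

def Phi (χ : PS N → ℂ) : PS N → ℂ := fun v =>
  ∫ t, χ t * Complex.exp (Complex.I * (symp v t : ℂ)) ∂(mes N)

lemma Phi_eq_fourier (χ : PS N → ℂ) (v : PS N) :
    Phi χ v = ((2 * Real.pi) ^ N)⁻¹ •
      (𝓕 χ) ((-(2 * Real.pi)⁻¹ : ℝ) • (Jiso N v)) := by
  rw [Phi, integral_mes]
  congr 1
  rw [Real.fourier_eq']
  refine integral_congr_ae (Filter.Eventually.of_forall fun t => ?_)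
  beta_reduce
  rw [smul_eq_mul, mul_comm]
  congr 1
  have h1 : ⟪t, (-(2 * Real.pi)⁻¹ : ℝ) • (Jiso N v)⟫ = -(2 * Real.pi)⁻¹ * symp v t := by
    rw [real_inner_smul_right, symp_inner, real_inner_comm]
  have h2 : -2 * Real.pi * ⟪t, (-(2 * Real.pi)⁻¹ : ℝ) • (Jiso N v)⟫ = symp v t := by
    rw [h1]
    field_simp
  rw [h2, mul_comm]

lemma Phi_continuous (χ : SchwartzMap (PS N) ℂ) : Continuous (Phi ⇑χ) := by
  have h : Phi ⇑χ = fun v => ((2 * Real.pi) ^ N)⁻¹ •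
      (𝓕 ⇑χ) ((-(2 * Real.pi)⁻¹ : ℝ) • (Jiso N v)) := funext (Phi_eq_fourier ⇑χ)
  rw [h, ← SchwartzMap.fourier_coe, ← SchwartzMap.fourierTransformCLM_apply (𝕜 := ℂ)]
  exact ((SchwartzMap.continuous (SchwartzMap.fourierTransformCLM ℂ χ)).comp
    ((continuous_const_smul (-(2 * Real.pi)⁻¹ : ℝ)).comp (Jiso N).continuous)).const_smul (((2 * Real.pi) ^ N)⁻¹ : ℝ)

lemma Phi_integrable (χ : SchwartzMap (PS N) ℂ) : Integrable (Phi ⇑χ) (mes N) := by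
  apply integrable_mes
  have h : Phi ⇑χ = fun v => ((2 * Real.pi) ^ N)⁻¹ •
      (𝓕 ⇑χ) ((-(2 * Real.pi)⁻¹ : ℝ) • (Jiso N v)) := funext (Phi_eq_fourier ⇑χ)
  rw [h, ← SchwartzMap.fourier_coe, ← SchwartzMap.fourierTransformCLM_apply (𝕜 := ℂ)]
  set F := SchwartzMap.fourierTransformCLM ℂ χ
  have hR : (-(2 * Real.pi)⁻¹ : ℝ) ≠ 0 := by
    simp [Real.pi_ne_zero]
  have h1 : Integrable (fun w => F ((-(2 * Real.pi)⁻¹ : ℝ) • w))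
      (volume : Measure (PS N)) := F.integrable.comp_smul hR
  have h2 : Integrable ((fun w => F ((-(2 * Real.pi)⁻¹ : ℝ) • w)) ∘ (Jiso N))
      (volume : Measure (PS N)) :=
    ((Jiso N).measurePreserving.integrable_comp h1.aestronglyMeasurable).2 h1
  exact h2.smul (((2 * Real.pi) ^ N)⁻¹ : ℝ)

lemma Phi_norm_le (χ : PS N → ℂ) (v : PS N) :
    ‖Phi χ v‖ ≤ ∫ t, ‖χ t‖ ∂(mes N) := by
  refine (norm_integral_le_integral_norm _).trans_eq ?_
  refine integral_congr_ae (Filter.Eventually.of_forall fun t => ?_)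
  beta_reduce
  rw [norm_mul, norm_expI, mul_one]

/-! ### representation of the twisted product -/

lemma rep (F G : PS N → ℂ) (w : PS N) :
    twProd F G w = ∫ a, F (w + a) * Complex.exp (Complex.I * (symp w a : ℂ)) * Phi G a
      ∂(mes N) := by
  unfold twProd
  refine integral_congr_ae (Filter.Eventually.of_forall fun a => ?_)
  have key : ∀ t : PS N, F (w + a) * G (w + t) * Complex.exp (Complex.I * (symp a t : ℂ))
      = (F (w + a) * Complex.exp (Complex.I * (symp w a : ℂ))) *
        ((fun t' => G t' * Complex.exp (Complex.I * (symp a t' : ℂ))) (w + t)) := by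
    intro t
    simp only
    have hph : symp w a + symp a (w + t) = symp a t := by
      rw [symp_add_right, symp_comm w a]; ring
    have he : Complex.exp (Complex.I * (symp w a : ℂ)) *
        Complex.exp (Complex.I * (symp a (w + t) : ℂ))
        = Complex.exp (Complex.I * (symp a t : ℂ)) := by
      rw [← expI_add, hph]
    calc F (w + a) * G (w + t) * Complex.exp (Complex.I * (symp a t : ℂ))
        = F (w + a) * G (w + t) *
          (Complex.exp (Complex.I * (symp w a : ℂ)) *
           Complex.exp (Complex.I * (symp a (w + t) : ℂ))) := by rw [he]
      _ = _ := by ring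
  simp_rw [key]
  rw [integral_const_mul, integral_add_left_eq_self
    (μ := mes N) (fun t' => G t' * Complex.exp (Complex.I * (symp a t' : ℂ))) w]
  rfl

/-! ### Fourier transform of a twisted product -/

lemma star (g h : SchwartzMap (PS N) ℂ) (s : PS N) :
    Phi (twProd ⇑g ⇑h) s
      = ∫ a, Phi ⇑g (s - a) * Phi ⇑h a * Complex.exp (Complex.I * (symp a s : ℂ))
        ∂(mes N) := by
  set F : PS N → PS N → ℂ := fun t a =>
    ⇑g (t + a) * Complex.exp (Complex.I * (symp t a : ℂ)) * Phi ⇑h a *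
      Complex.exp (Complex.I * (symp s t : ℂ)) with hF
  have hcont : Continuous fun p : PS N × PS N => F p.1 p.2 := by
    simp only [hF]
    exact (((g.continuous.comp (continuous_fst.add continuous_snd)).mul
        (expSymp_continuous continuous_fst continuous_snd)).mul
      ((Phi_continuous h).comp continuous_snd)).mul
      (expSymp_continuous continuous_const continuous_fst)
  have hslice : ∀ a : PS N, Integrable (fun t => F t a) (mes N) := by
    intro a
    have hga : Integrable (fun t => ⇑g (t + a)) (mes N) :=
      (integrable_mes g.integrable).comp_add_right a
    refine (hga.norm.mul_const ‖Phi ⇑h a‖).mono' ?_ ?_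
    · exact ((((g.continuous.comp (continuous_id.add continuous_const)).mul
        (expSymp_continuous continuous_id continuous_const)).mul
        continuous_const).mul
        (expSymp_continuous continuous_const continuous_id)).aestronglyMeasurable
    · refine Filter.Eventually.of_forall fun t => ?_
      simp only [hF, norm_mul, norm_expI, mul_one]
      exact le_rfl
  have hnorm : ∀ a : PS N, ∫ t, ‖F t a‖ ∂(mes N) = ‖Phi ⇑h a‖ * ∫ t, ‖⇑g t‖ ∂(mes N) := by
    intro a
    have hpt : ∀ t : PS N, ‖F t a‖ = ‖Phi ⇑h a‖ * ((fun t' => ‖⇑g t'‖) (t + a)) := by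
      intro t
      simp only [hF, norm_mul, norm_expI, mul_one]
      ring
    calc ∫ t, ‖F t a‖ ∂(mes N)
        = ∫ t, ‖Phi ⇑h a‖ * ((fun t' => ‖⇑g t'‖) (t + a)) ∂(mes N) :=
          integral_congr_ae (Filter.Eventually.of_forall hpt)
      _ = ‖Phi ⇑h a‖ * ∫ t, (fun t' => ‖⇑g t'‖) (t + a) ∂(mes N) := integral_const_mul _ _
      _ = ‖Phi ⇑h a‖ * ∫ t, ‖⇑g t‖ ∂(mes N) := by
          rw [integral_add_right_eq_self (μ := mes N) (fun t' => ‖⇑g t'‖) a]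
  have hint : Integrable (Function.uncurry F) ((mes N).prod (mes N)) := by
    refine (integrable_prod_iff' hcont.aestronglyMeasurable).2
      ⟨Filter.Eventually.of_forall hslice, ?_⟩
    refine (((Phi_integrable h).norm.mul_const (∫ t, ‖⇑g t‖ ∂(mes N))).congr ?_)
    exact Filter.Eventually.of_forall fun a => (hnorm a).symm
  calc Phi (twProd ⇑g ⇑h) s
      = ∫ t, ∫ a, F t a ∂(mes N) ∂(mes N) := by
        unfold Phi
        refine integral_congr_ae (Filter.Eventually.of_forall fun t => ?_)
        beta_reduce
        rw [rep ⇑g ⇑h t, ← integral_mul_const]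
    _ = ∫ a, ∫ t, F t a ∂(mes N) ∂(mes N) := integral_integral_swap hint
    _ = ∫ a, Phi ⇑g (s - a) * Phi ⇑h a * Complex.exp (Complex.I * (symp a s : ℂ))
        ∂(mes N) := by
        refine integral_congr_ae (Filter.Eventually.of_forall fun a => ?_)
        beta_reduce
        have key : ∀ t : PS N, F t a
            = ((fun t' => ⇑g t' * Complex.exp (Complex.I * (symp (s - a) t' : ℂ))) (t + a)) *
              (Phi ⇑h a * Complex.exp (Complex.I * (symp a s : ℂ))) := by
          intro t
          simp only [hF]
          have hph : symp t a + symp s t = symp (s - a) (t + a) + symp a s := by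
            rw [symp_sub_left, symp_add_right s t a, symp_add_right a t a, symp_self,
              symp_comm a s, symp_comm t a]
            ring
          have he : Complex.exp (Complex.I * (symp t a : ℂ)) *
              Complex.exp (Complex.I * (symp s t : ℂ))
              = Complex.exp (Complex.I * (symp (s - a) (t + a) : ℂ)) *
                Complex.exp (Complex.I * (symp a s : ℂ)) := by
            rw [← expI_add, ← expI_add, hph]
          calc ⇑g (t + a) * Complex.exp (Complex.I * (symp t a : ℂ)) * Phi ⇑h a *
              Complex.exp (Complex.I * (symp s t : ℂ))
              = (⇑g (t + a) * Phi ⇑h a) *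
                (Complex.exp (Complex.I * (symp t a : ℂ)) *
                 Complex.exp (Complex.I * (symp s t : ℂ))) := by ring
            _ = (⇑g (t + a) * Phi ⇑h a) *
                (Complex.exp (Complex.I * (symp (s - a) (t + a) : ℂ)) *
                 Complex.exp (Complex.I * (symp a s : ℂ))) := by rw [he]
            _ = _ := by ring
        have h1 : ∫ t, F t a ∂(mes N)
            = ∫ t, ((fun t' => ⇑g t' * Complex.exp (Complex.I * (symp (s - a) t' : ℂ)))
                (t + a)) *
              (Phi ⇑h a * Complex.exp (Complex.I * (symp a s : ℂ))) ∂(mes N) :=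
          integral_congr_ae (Filter.Eventually.of_forall key)
        rw [h1, integral_mul_const, integral_add_right_eq_self (μ := mes N)
          (fun t' => ⇑g t' * Complex.exp (Complex.I * (symp (s - a) t' : ℂ))) a]
        exact (mul_assoc _ _ _).symm

end TwAssoc

theorem twProd_assoc (N : ℕ) (hN : 0 < N)
    (f g h : SchwartzMap (PS N) ℂ) (u : PS N) :
    twProd (twProd (⇑f) (⇑g)) (⇑h) u = twProd (⇑f) (twProd (⇑g) (⇑h)) u := by
  open TwAssoc in
  have hR : twProd (⇑f) (twProd (⇑g) (⇑h)) u
      = ∫ x, ⇑f (u + x) * Complex.exp (Complex.I * (symp u x : ℂ)) *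
          (∫ a, Phi ⇑g (x - a) * Phi ⇑h a * Complex.exp (Complex.I * (symp a x : ℂ))
            ∂(mes N)) ∂(mes N) := by
    rw [rep ⇑f (twProd ⇑g ⇑h) u]
    refine integral_congr_ae (Filter.Eventually.of_forall fun x => ?_)
    beta_reduce
    rw [star g h x]
  have hL : twProd (twProd (⇑f) (⇑g)) (⇑h) u
      = ∫ x, ⇑f (u + x) * Complex.exp (Complex.I * (symp u x : ℂ)) *
          (∫ a, Phi ⇑g (x - a) * Phi ⇑h a * Complex.exp (Complex.I * (symp a x : ℂ))
            ∂(mes N)) ∂(mes N) := by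
    set F2 : PS N → PS N → ℂ := fun s x =>
      ⇑f (u + x) * Complex.exp (Complex.I * (symp (u + s) (x - s) : ℂ)) * Phi ⇑g (x - s) *
        (Complex.exp (Complex.I * (symp u s : ℂ)) * Phi ⇑h s) with hF2
    have hcont2 : Continuous fun p : PS N × PS N => F2 p.1 p.2 := by
      simp only [hF2]
      exact (((f.continuous.comp (continuous_const.add continuous_snd)).mul
          (expSymp_continuous (continuous_const.add continuous_fst)
            (continuous_snd.sub continuous_fst))).mul
          ((Phi_continuous g).comp (continuous_snd.sub continuous_fst))).mul
        ((expSymp_continuous continuous_const continuous_fst).mul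
          ((Phi_continuous h).comp continuous_fst))
    have hCg : (0:ℝ) ≤ ∫ t, ‖⇑g t‖ ∂(mes N) := integral_nonneg fun t => norm_nonneg _
    have hint2 : Integrable (Function.uncurry F2) ((mes N).prod (mes N)) := by
      have hbound : Integrable (fun p : PS N × PS N =>
          ‖Phi ⇑h p.1‖ * ((∫ t, ‖⇑g t‖ ∂(mes N)) * ‖⇑f (u + p.2)‖))
          ((mes N).prod (mes N)) :=
        (Phi_integrable h).norm.mul_prod
          (((integrable_mes f.integrable).comp_add_left u).norm.const_mul _)
      refine hbound.mono' hcont2.aestronglyMeasurable ?_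
      refine Filter.Eventually.of_forall fun p => ?_
      simp only [hF2, Function.uncurry, norm_mul, norm_expI, mul_one, one_mul]
      calc ‖⇑f (u + p.2)‖ * ‖Phi ⇑g (p.2 - p.1)‖ * ‖Phi ⇑h p.1‖
          ≤ ‖⇑f (u + p.2)‖ * (∫ t, ‖⇑g t‖ ∂(mes N)) * ‖Phi ⇑h p.1‖ := by
            gcongr
            exact Phi_norm_le _ _
        _ = ‖Phi ⇑h p.1‖ * ((∫ t, ‖⇑g t‖ ∂(mes N)) * ‖⇑f (u + p.2)‖) := by ring
    have step1 : twProd (twProd (⇑f) (⇑g)) (⇑h) u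
        = ∫ s, ∫ x, F2 s x ∂(mes N) ∂(mes N) := by
      rw [rep (twProd ⇑f ⇑g) ⇑h u]
      refine integral_congr_ae (Filter.Eventually.of_forall fun s => ?_)
      beta_reduce
      rw [rep ⇑f ⇑g (u + s)]
      have htrans : ∫ x, ⇑f (u + x) *
            Complex.exp (Complex.I * (symp (u + s) (x - s) : ℂ)) * Phi ⇑g (x - s) ∂(mes N)
          = ∫ a, ⇑f (u + s + a) * Complex.exp (Complex.I * (symp (u + s) a : ℂ)) * Phi ⇑g a
            ∂(mes N) := by
        rw [← integral_sub_right_eq_self (μ := mes N)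
          (fun a => ⇑f (u + s + a) * Complex.exp (Complex.I * (symp (u + s) a : ℂ)) *
            Phi ⇑g a) s]
        refine integral_congr_ae (Filter.Eventually.of_forall fun x => ?_)
        beta_reduce
        rw [show u + s + (x - s) = u + x by abel]
      rw [← htrans, mul_assoc, ← integral_mul_const]
    rw [step1, integral_integral_swap hint2]
    refine integral_congr_ae (Filter.Eventually.of_forall fun x => ?_)
    beta_reduce
    have key : ∀ s : PS N, F2 s x
        = (⇑f (u + x) * Complex.exp (Complex.I * (symp u x : ℂ))) *
          ((fun s' => Phi ⇑g (x - s') * Phi ⇑h s' *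
            Complex.exp (Complex.I * (symp s' x : ℂ))) s) := by
      intro s
      simp only [hF2]
      have hph : symp (u + s) (x - s) + symp u s = symp u x + symp s x := by
        rw [symp_add_left, symp_sub_right u x s, symp_sub_right s x s, symp_self]
        ring
      have he : Complex.exp (Complex.I * (symp (u + s) (x - s) : ℂ)) *
          Complex.exp (Complex.I * (symp u s : ℂ))
          = Complex.exp (Complex.I * (symp u x : ℂ)) *
            Complex.exp (Complex.I * (symp s x : ℂ)) := by
        rw [← expI_add, ← expI_add, hph]
      calc ⇑f (u + x) * Complex.exp (Complex.I * (symp (u + s) (x - s) : ℂ)) *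
          Phi ⇑g (x - s) *
            (Complex.exp (Complex.I * (symp u s : ℂ)) * Phi ⇑h s)
          = (⇑f (u + x) * Phi ⇑g (x - s) * Phi ⇑h s) *
            (Complex.exp (Complex.I * (symp (u + s) (x - s) : ℂ)) *
             Complex.exp (Complex.I * (symp u s : ℂ))) := by ring
        _ = (⇑f (u + x) * Phi ⇑g (x - s) * Phi ⇑h s) *
            (Complex.exp (Complex.I * (symp u x : ℂ)) *
             Complex.exp (Complex.I * (symp s x : ℂ))) := by rw [he]
        _ = _ := by ring
    have h1 : ∫ s, F2 s x ∂(mes N)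
        = ∫ s, (⇑f (u + x) * Complex.exp (Complex.I * (symp u x : ℂ))) *
            ((fun s' => Phi ⇑g (x - s') * Phi ⇑h s' *
              Complex.exp (Complex.I * (symp s' x : ℂ))) s) ∂(mes N) :=
      integral_congr_ae (Filter.Eventually.of_forall key)
    rw [h1, integral_const_mul]
  rw [hL, hR]
end
end

section
/- Tracial property of the twisted product: for all complex-valued Schwartz functions f and g on ℝ^{2N}, ∫ (f × g)(u) du = ∫ (g × f)(u) du = ∫ f(u) g(u) du. -/
open MeasureTheory SchwartzMap Complex FourierTransform Real RealInnerProductSpace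

noncomputable section

variable {N : ℕ}

def Jlin (N : ℕ) : PS N →ₗ[ℝ] PS N where
  toFun s := (WithLp.equiv 2 _).symm (Sum.elim (fun i => -(s (Sum.inr i))) (fun i => s (Sum.inl i)))
  map_add' x y := by
    ext j; cases j <;> simp [WithLp.equiv_symm_apply, PiLp.toLp_apply, PiLp.add_apply] <;> ring
  map_smul' c x := by
    ext j; cases j <;> simp [WithLp.equiv_symm_apply, PiLp.toLp_apply, PiLp.smul_apply] <;> ring

def Jlin' (N : ℕ) : PS N →ₗ[ℝ] PS N where
  toFun s := (WithLp.equiv 2 _).symm (Sum.elim (fun i => s (Sum.inr i)) (fun i => -(s (Sum.inl i))))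
  map_add' x y := by
    ext j; cases j <;> simp [WithLp.equiv_symm_apply, PiLp.toLp_apply, PiLp.add_apply] <;> ring
  map_smul' c x := by
    ext j; cases j <;> simp [WithLp.equiv_symm_apply, PiLp.toLp_apply, PiLp.smul_apply] <;> ring

def Jequiv (N : ℕ) : PS N ≃ₗ[ℝ] PS N :=
  LinearEquiv.ofLinear (Jlin N) (Jlin' N)
    (by ext s j; cases j <;> simp [Jlin, Jlin', WithLp.equiv_symm_apply, PiLp.toLp_apply])
    (by ext s j; cases j <;> simp [Jlin, Jlin', WithLp.equiv_symm_apply, PiLp.toLp_apply])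

lemma Jequiv_apply_inl (s : PS N) (i : Fin N) : Jequiv N s (Sum.inl i) = -(s (Sum.inr i)) := rfl
lemma Jequiv_apply_inr (s : PS N) (i : Fin N) : Jequiv N s (Sum.inr i) = s (Sum.inl i) := rfl

def Jiso (N : ℕ) : PS N ≃ₗᵢ[ℝ] PS N :=
  (Jequiv N).isometryOfInner (by
    intro x y
    simp only [PiLp.inner_apply, RCLike.inner_apply, conj_trivial, Fintype.sum_sum_type,
      Jequiv_apply_inl, Jequiv_apply_inr]
    rw [add_comm]
    congr 1 <;> (apply Finset.sum_congr rfl; intro i _; ring))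

lemma symp_eq_inner (s t : PS N) : symp s t = inner ℝ (Jiso N s) t := by
  simp only [Jiso, LinearEquiv.coe_isometryOfInner, PiLp.inner_apply, RCLike.inner_apply,
    conj_trivial, Fintype.sum_sum_type, Jequiv_apply_inl, Jequiv_apply_inr, symp]
  rw [Finset.sum_sub_distrib, sub_eq_add_neg, ← Finset.sum_neg_distrib, add_comm]
  congr 1 <;> first
    | rfl
    | (apply Finset.sum_congr rfl; intro i _; ring)

lemma symp_add_right (s u t : PS N) : symp s (u + t) = symp s u + symp s t := by
  simp only [symp_eq_inner]
  exact inner_add_right _ _ _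

lemma symp_self (s : PS N) : symp s s = 0 := by
  apply Finset.sum_eq_zero; intro i _; ring

lemma twoPiPowPos : (0:ℝ) < (2 * Real.pi) ^ N := by positivity

lemma integral_mes (h : PS N → ℂ) :
    ∫ u, h u ∂(mes N) = (((2 * Real.pi) ^ N)⁻¹ : ℝ) • ∫ u, h u ∂volume := by
  rw [mes, integral_smul_measure, ENNReal.toReal_inv, ENNReal.toReal_ofReal twoPiPowPos.le]

lemma FT1 (g : PS N → ℂ) (s : PS N) :
    𝓕 g ((-(2 * Real.pi)⁻¹) • Jiso N s) =
      ∫ t, g t * Complex.exp (Complex.I * (symp s t : ℂ)) := by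
  rw [Real.fourier_eq']
  apply integral_congr_ae
  filter_upwards with t
  rw [real_inner_smul_right, smul_eq_mul]
  rw [show (inner ℝ t (Jiso N s) : ℝ) = symp s t by rw [symp_eq_inner, real_inner_comm]]
  rw [show (-2 * Real.pi * (-(2 * Real.pi)⁻¹ * symp s t)) = symp s t by
    field_simp]
  ring

lemma FT2 (f : PS N → ℂ) (s : PS N) :
    𝓕 f (((2 * Real.pi)⁻¹) • Jiso N s) =
      ∫ t, f t * Complex.exp (-(Complex.I * (symp s t : ℂ))) := by
  rw [Real.fourier_eq']
  apply integral_congr_ae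
  filter_upwards with t
  rw [real_inner_smul_right, smul_eq_mul]
  rw [show (inner ℝ t (Jiso N s) : ℝ) = symp s t by rw [symp_eq_inner, real_inner_comm]]
  rw [show (-2 * Real.pi * ((2 * Real.pi)⁻¹ * symp s t)) = -symp s t by
    field_simp]
  push_cast
  ring

def Ghat (N : ℕ) (g : PS N → ℂ) : PS N → ℂ := fun s =>
  𝓕 g ((-(2 * Real.pi)⁻¹) • Jiso N s)

set_option maxHeartbeats 1000000 in
lemma Ghat_int (g : SchwartzMap (PS N) ℂ) : Integrable (Ghat N ⇑g) volume := by
  have hr : (-(2 * Real.pi)⁻¹ : ℝ) ≠ 0 := by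
    simp [Real.pi_ne_zero]
  have hFg : Integrable (𝓕 ⇑g) volume := by
    rw [← fourier_coe]
    exact (𝓕 g).integrable
  have h1 : Integrable (fun v : PS N => 𝓕 ⇑g ((-(2 * Real.pi)⁻¹) • v)) volume :=
    (integrable_comp_smul_iff volume (𝓕 ⇑g) hr).2 hFg
  have h2 := ((Jiso N).measurePreserving.integrable_comp h1.aestronglyMeasurable).2 h1
  exact h2


lemma Ghat_eq_neg (g : PS N → ℂ) (s : PS N) :
    Ghat N g s = 𝓕 g (-((2 * Real.pi)⁻¹ • Jiso N s)) := by
  rw [Ghat, neg_smul]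

lemma phase_norm (x : ℝ) : ‖Complex.exp (Complex.I * (x : ℂ))‖ = 1 := by
  simp [Complex.norm_exp]

lemma phase_norm' (x : ℝ) : ‖Complex.exp (-(Complex.I * (x : ℂ)))‖ = 1 := by
  simp [Complex.norm_exp]

lemma Ghat_cont (g : SchwartzMap (PS N) ℂ) : Continuous (Ghat N ⇑g) := by
  have hFg : Continuous (𝓕 ⇑g) := by
    rw [← fourier_coe]
    exact (𝓕 g).continuous
  exact hFg.comp ((continuous_const_smul _).comp (Jiso N).continuous)

lemma symp_cont : Continuous (fun p : PS N × PS N => symp p.1 p.2) := by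
  simp only [symp_eq_inner]
  exact continuous_inner.comp (((Jiso N).continuous.comp continuous_fst).prodMk continuous_snd)

def Phi (N : ℕ) (f g : PS N → ℂ) : PS N → PS N → ℂ := fun u s =>
  f (u + s) * Complex.exp (-(Complex.I * (symp s u : ℂ))) * Ghat N g s

lemma Phi_cont (f g : SchwartzMap (PS N) ℂ) :
    Continuous (fun p : PS N × PS N => Phi N ⇑f ⇑g p.1 p.2) := by
  apply Continuous.mul
  apply Continuous.mul
  · exact f.continuous.comp (continuous_fst.add continuous_snd)
  · apply Complex.continuous_exp.comp
    apply Continuous.neg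
    exact continuous_const.mul (Complex.continuous_ofReal.comp (symp_cont.comp continuous_swap))
  · exact (Ghat_cont g).comp continuous_snd

lemma Phi_sect (f g : SchwartzMap (PS N) ℂ) (s : PS N) :
    Integrable (fun u => Phi N ⇑f ⇑g u s) volume := by
  have base : Integrable
      (fun u => Complex.exp (-(Complex.I * (symp s u : ℂ))) * (f (u + s) * Ghat N ⇑g s))
      volume := by
    apply Integrable.bdd_mul (c := 1) ((f.integrable.comp_add_right s).mul_const _)
    · apply Continuous.aestronglyMeasurable
      apply Complex.continuous_exp.comp
      apply Continuous.neg
      exact continuous_const.mul (Complex.continuous_ofReal.comp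
        (symp_cont.comp (Continuous.prodMk_right s)))
    · exact Filter.Eventually.of_forall fun u => (phase_norm' (symp s u)).le
  exact base.congr (Filter.Eventually.of_forall fun u => by simp [Phi]; ring)

lemma Phi_norm_int (f g : SchwartzMap (PS N) ℂ) (s : PS N) :
    (∫ u, ‖Phi N ⇑f ⇑g u s‖ ∂volume) = (∫ u, ‖f u‖ ∂volume) * ‖Ghat N ⇑g s‖ := by
  have h1 : ∀ u, ‖Phi N ⇑f ⇑g u s‖ = ‖f (u + s)‖ * ‖Ghat N ⇑g s‖ := fun u => by
    simp only [Phi, norm_mul, phase_norm']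
    ring
  simp_rw [h1]
  rw [integral_mul_const]
  congr 1
  exact integral_add_right_eq_self (fun u => ‖f u‖) s

lemma Phi_fubini (f g : SchwartzMap (PS N) ℂ) :
    Integrable (Function.uncurry (Phi N ⇑f ⇑g)) (volume.prod volume) := by
  rw [integrable_prod_iff']
  · constructor
    · exact Filter.Eventually.of_forall (Phi_sect f g)
    · apply Integrable.congr (((Ghat_int g).norm.const_mul (∫ u, ‖f u‖ ∂volume)))
      exact Filter.Eventually.of_forall fun s => (Phi_norm_int f g s).symm
  · exact (Phi_cont f g).aestronglyMeasurable

lemma step_inner (f g : SchwartzMap (PS N) ℂ) (u : PS N) :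
    twProd ⇑f ⇑g u
      = ((((2 * Real.pi) ^ N)⁻¹ * ((2 * Real.pi) ^ N)⁻¹ : ℝ)) • ∫ s, Phi N ⇑f ⇑g u s ∂volume := by
  have hsplit : ∀ s t : PS N, f (u + s) * g (u + t) * Complex.exp (Complex.I * (symp s t : ℂ)) =
      (f (u + s) * Complex.exp (-(Complex.I * (symp s u : ℂ)))) *
        ((fun v => g v * Complex.exp (Complex.I * (symp s v : ℂ))) (u + t)) := by
    intro s t
    simp only
    rw [symp_add_right]
    push_cast
    rw [mul_add, Complex.exp_add, Complex.exp_neg]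
    field_simp [Complex.exp_ne_zero]
  have hin : ∀ s, (∫ t, f (u + s) * g (u + t) * Complex.exp (Complex.I * (symp s t : ℂ))
        ∂(mes N)) = (((2 * Real.pi) ^ N)⁻¹ : ℝ) • Phi N ⇑f ⇑g u s := by
    intro s
    rw [integral_mes]
    congr 1
    simp_rw [hsplit s]
    rw [integral_const_mul,
      integral_add_left_eq_self (fun v => g v * Complex.exp (Complex.I * (symp s v : ℂ))) u,
      ← FT1 ⇑g s]
    rfl
  show (∫ s, ∫ t, f (u + s) * g (u + t) * Complex.exp (Complex.I * (symp s t : ℂ))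
      ∂(mes N) ∂(mes N)) = _
  rw [integral_mes]
  simp_rw [hin]
  rw [integral_smul, smul_smul]

lemma parseval (f g : SchwartzMap (PS N) ℂ) :
    (∫ ξ, 𝓕 ⇑f ξ * 𝓕 ⇑g (-ξ) ∂volume) = ∫ x, f x * g x ∂volume := by
  set g2 : SchwartzMap (PS N) ℂ := (fourierTransformCLE ℂ 𝓢(PS N, ℂ)).symm g with hg2def
  have hg2 : ∀ ξ : PS N, 𝓕 ⇑g (-ξ) = g2 ξ := by
    intro ξ
    rw [hg2def]
    rw [show ⇑((fourierTransformCLE ℂ 𝓢(PS N, ℂ)).symm g) = 𝓕⁻ ⇑g from fourierInv_coe g]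
    rw [Real.fourierInv_eq_fourier_neg]
  simp_rw [hg2]
  have hflip : (innerₗ (PS N)).flip = innerₗ (PS N) := by
    apply LinearMap.ext; intro x; apply LinearMap.ext; intro y
    simp only [LinearMap.flip_apply, innerₗ_apply_apply]
    exact real_inner_comm _ _
  have hmain := VectorFourier.integral_bilin_fourierIntegral_eq_flip
      (μ := (volume : Measure (PS N))) (ν := (volume : Measure (PS N)))
      (L := innerₗ (PS N)) (ContinuousLinearMap.mul ℂ ℂ)
      Real.continuous_fourierChar (by exact continuous_inner) f.integrable g2.integrable
  rw [hflip] at hmain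
  simp only [ContinuousLinearMap.mul_apply'] at hmain
  have hmain' : (∫ ξ, 𝓕 ⇑f ξ * (g2 ξ) ∂volume)
      = ∫ x, f x * (VectorFourier.fourierIntegral 𝐞 volume (innerₗ (PS N)) ⇑g2 x) ∂volume :=
    hmain
  rw [hmain']
  have hinv : ∀ x, (VectorFourier.fourierIntegral 𝐞 volume (innerₗ (PS N)) ⇑g2 x) = g x := by
    intro x
    have h1 : (VectorFourier.fourierIntegral 𝐞 volume (innerₗ (PS N)) ⇑g2 x) = 𝓕 ⇑g2 x := rfl
    rw [h1, show 𝓕 ⇑g2 = ⇑(fourierTransformCLE ℂ 𝓢(PS N, ℂ) g2) from (fourier_coe g2).symm,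
      hg2def, (fourierTransformCLE ℂ 𝓢(PS N, ℂ)).apply_symm_apply]
  simp_rw [hinv]

lemma step_u (f g : SchwartzMap (PS N) ℂ) (s : PS N) :
    (∫ u, Phi N ⇑f ⇑g u s ∂volume)
      = 𝓕 ⇑f ((2 * Real.pi)⁻¹ • Jiso N s) * 𝓕 ⇑g (-((2 * Real.pi)⁻¹ • Jiso N s)) := by
  have hsplit : ∀ u, Phi N ⇑f ⇑g u s =
      ((fun v => f v * Complex.exp (-(Complex.I * (symp s v : ℂ)))) (s + u)) * Ghat N ⇑g s := by
    intro u
    show f (u + s) * Complex.exp (-(Complex.I * (symp s u : ℂ))) * Ghat N ⇑g s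
      = f (s + u) * Complex.exp (-(Complex.I * (symp s (s + u) : ℂ))) * Ghat N ⇑g s
    rw [symp_add_right, symp_self, zero_add, add_comm u s]
  simp_rw [hsplit]
  rw [integral_mul_const,
    integral_add_left_eq_self (fun v => f v * Complex.exp (-(Complex.I * (symp s v : ℂ)))) s,
    ← FT2 ⇑f s, Ghat_eq_neg]

lemma key (f g : SchwartzMap (PS N) ℂ) :
    ∫ u, twProd ⇑f ⇑g u ∂(mes N) = ∫ u, f u * g u ∂(mes N) := by
  rw [integral_mes]
  simp_rw [step_inner f g]
  rw [integral_smul, smul_smul, integral_integral_swap (Phi_fubini f g)]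
  simp_rw [step_u f g]
  have hJ := MeasurePreserving.integral_comp (μ := (volume : Measure (PS N)))
    (ν := (volume : Measure (PS N))) (Jiso N).measurePreserving
    (Jiso N).toHomeomorph.measurableEmbedding
    (fun v => 𝓕 ⇑f ((2 * Real.pi)⁻¹ • v) * 𝓕 ⇑g (-((2 * Real.pi)⁻¹ • v)))
  beta_reduce at hJ
  rw [hJ]
  have hS := MeasureTheory.Measure.integral_comp_smul (μ := (volume : Measure (PS N)))
    (fun ξ => 𝓕 ⇑f ξ * 𝓕 ⇑g (-ξ)) ((2 * Real.pi)⁻¹)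
  beta_reduce at hS
  rw [hS]
  have hfr : Module.finrank ℝ (PS N) = N + N := by
    simp [finrank_euclideanSpace]
  rw [hfr, parseval f g, integral_mes (fun u => f u * g u), smul_smul]
  congr 1
  rw [inv_pow, inv_inv, abs_of_pos (by positivity : (0:ℝ) < (2 * Real.pi) ^ (N + N)), pow_add]
  have h2π : ((2 * Real.pi) ^ N : ℝ) ≠ 0 := twoPiPowPos.ne'
  field_simp

theorem twProd_tracial (N : ℕ) (hN : 0 < N)
    (f g : SchwartzMap (PS N) ℂ) :
    (∫ u, twProd (⇑f) (⇑g) u ∂(mes N)) = (∫ u, twProd (⇑g) (⇑f) u ∂(mes N)) ∧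
    (∫ u, twProd (⇑f) (⇑g) u ∂(mes N)) = ∫ u, f u * g u ∂(mes N) := by
  refine ⟨?_, key f g⟩
  rw [key f g, key g f]
  exact integral_congr_ae (Filter.Eventually.of_forall fun u => mul_comm _ _)
end
end
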